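/- arXiv:2107.12117 — 2 statements merged into one kernel-verified Lean document; each statement's English description precedes it below -/
import Mathlib

section
/- Let Ω ⊂ ℝⁿ be a bounded domain and μ a probability measure on the closure of Ω. Then sup{∫_Ω u dμ : u ∈ Lip_0(Ω), Lip(u) ≤ 1} = inf_{δ ∈ P(∂Ω)} W¹(μ,δ), where W¹(μ,δ) = sup{∫ u dμ − ∫ u dδ : u ∈ Lip(closure Ω), Lip(u) ≤ 1} and P(∂Ω) is the set of probability measures supported on ∂Ω. -/
open MeasureTheory Metric Set

variable {α : Type*} [MetricSpace α]

/-- piecewise nearest-ish point selection along a list -/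
noncomputable def pickFn (F : Set α) (ε : ℝ) (y₀ : α) : List α → α → α
  | [] => fun _ => y₀
  | y :: l => Set.piecewise {x | dist x y ≤ infDist x F + ε} (fun _ => y) (pickFn F ε y₀ l)

lemma pickFn_measurable [MeasurableSpace α] [BorelSpace α] (F : Set α) (ε : ℝ) (y₀ : α)
    (l : List α) : Measurable (pickFn F ε y₀ l) := by
  induction l with
  | nil => exact measurable_const
  | cons y l ih =>
    refine Measurable.piecewise ?_ measurable_const ih
    have : IsClosed {x : α | dist x y ≤ infDist x F + ε} := by
      have hc : Continuous fun x : α => dist x y - infDist x F :=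
        (continuous_id.dist continuous_const).sub (continuous_infDist_pt F)
      have : {x : α | dist x y ≤ infDist x F + ε} = (fun x : α => dist x y - infDist x F) ⁻¹' Set.Iic ε := by
        ext x; simp [sub_le_iff_le_add, add_comm]
      rw [this]
      exact IsClosed.preimage hc isClosed_Iic
    exact this.measurableSet

lemma pickFn_mem (F : Set α) (ε : ℝ) (y₀ : α) (hy₀ : y₀ ∈ F) (l : List α)
    (hl : ∀ y ∈ l, y ∈ F) (x : α) : pickFn F ε y₀ l x ∈ F := by
  induction l with
  | nil => exact hy₀
  | cons y l ih =>
    by_cases hx : x ∈ {x : α | dist x y ≤ infDist x F + ε}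
    · simpa [pickFn, Set.piecewise, hx] using hl y (by simp)
    · simp only [pickFn, Set.piecewise, hx, if_false]
      exact ih fun z hz => hl z (by simp [hz])

lemma pickFn_dist (F : Set α) (ε : ℝ) (y₀ : α) (l : List α) (x : α)
    (h : ∃ y ∈ l, dist x y ≤ infDist x F + ε) :
    dist x (pickFn F ε y₀ l x) ≤ infDist x F + ε := by
  induction l with
  | nil => simp at h
  | cons y l ih =>
    by_cases hx : x ∈ {x : α | dist x y ≤ infDist x F + ε}
    · simp only [pickFn, Set.piecewise, hx, if_true]
      exact hx
    · simp only [pickFn, Set.piecewise, hx, if_false]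
      refine ih ?_
      obtain ⟨z, hz, hzd⟩ := h
      rcases List.mem_cons.1 hz with rfl | hz'
      · exact absurd hzd hx
      · exact ⟨z, hz', hzd⟩

/-- integrability of a continuous function against a finite measure concentrated on a compact -/
lemma integrable_of_compact_support {α : Type*} [MeasurableSpace α] [MetricSpace α]
    [OpensMeasurableSpace α]
    (μ : Measure α) [IsFiniteMeasure μ] (K : Set α) (hK : IsCompact K) (hμK : μ Kᶜ = 0)
    (u : α → ℝ) (hu : Continuous u) : Integrable u μ := by
  obtain ⟨C, hC⟩ := hK.exists_bound_of_continuousOn hu.continuousOn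
  refine ⟨hu.aestronglyMeasurable, ?_⟩
  refine HasFiniteIntegral.of_bounded (C := C) ?_
  have : {x | ¬ ‖u x‖ ≤ C} ⊆ Kᶜ := fun x hx hxK => hx (hC x hxK)
  exact (ae_iff).2 (measure_mono_null this hμK)

/-- For a probability measure `μ` on the closure of a bounded domain `Ω`,
`sup{∫ u dμ : u ∈ Lip_0(Ω), Lip(u) ≤ 1} = inf_{δ ∈ P(∂Ω)} W¹(μ,δ)`, where `W¹` is the
1-Wasserstein distance in Kantorovich–Rubinstein dual form. -/
theorem dual_functional_eq_wasserstein_projection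
    {n : ℕ} (Ω : Set (EuclideanSpace ℝ (Fin n)))
    (hΩo : IsOpen Ω) (hΩb : Bornology.IsBounded Ω) (hΩne : Ω.Nonempty)
    (μ : Measure (EuclideanSpace ℝ (Fin n))) [IsProbabilityMeasure μ]
    (hμ : μ (closure Ω)ᶜ = 0) :
    sSup {r : ℝ | ∃ u : EuclideanSpace ℝ (Fin n) → ℝ,
        LipschitzWith 1 u ∧ (∀ x ∈ frontier Ω, u x = 0) ∧ r = ∫ x, u x ∂μ} =
      sInf {w : ℝ | ∃ δ : Measure (EuclideanSpace ℝ (Fin n)),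
        IsProbabilityMeasure δ ∧ δ (frontier Ω)ᶜ = 0 ∧
        w = sSup {r : ℝ | ∃ u : EuclideanSpace ℝ (Fin n) → ℝ,
          LipschitzWith 1 u ∧ r = (∫ x, u x ∂μ) - (∫ x, u x ∂δ)}} := by
  by_cases hF : (frontier Ω).Nonempty
  · -- main case
    obtain ⟨y₀, hy₀⟩ := hF
    have hKb : Bornology.IsBounded (closure Ω) := hΩb.closure
    have hKc : IsCompact (closure Ω) := isCompact_of_isClosed_isBounded isClosed_closure hKb
    have hFK : frontier Ω ⊆ closure Ω := frontier_subset_closure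
    have hFc : IsCompact (frontier Ω) :=
      isCompact_of_isClosed_isBounded isClosed_frontier (hKb.subset hFK)
    have hLip : LipschitzWith 1 (fun x => infDist x (frontier Ω)) := lipschitz_infDist_pt _
    have hId : Integrable (fun x => infDist x (frontier Ω)) μ :=
      integrable_of_compact_support μ _ hKc hμ _ (continuous_infDist_pt _)
    set I := ∫ x, infDist x (frontier Ω) ∂μ with hIdef
    have hI0 : 0 ≤ I := integral_nonneg fun x => infDist_nonneg
    have hμae : ∀ᵐ x ∂μ, x ∈ closure Ω := by
      rw [ae_iff]
      exact hμ
    -- pointwise upper bound for admissible u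
    have hub : ∀ u : EuclideanSpace ℝ (Fin n) → ℝ, LipschitzWith 1 u →
        (∀ x ∈ frontier Ω, u x = 0) → ∀ x, u x ≤ infDist x (frontier Ω) := by
      intro u hu hu0 x
      obtain ⟨p, hp, hpd⟩ := hFc.exists_infDist_eq_dist ⟨y₀, hy₀⟩ x
      have h1 : dist (u x) (u p) ≤ dist x p := by simpa using hu.dist_le_mul x p
      rw [Real.dist_eq] at h1
      have h2 : u x - u p ≤ dist x p := (le_abs_self _).trans h1
      rw [hu0 p hp, sub_zero] at h2
      rw [hpd]
      exact h2
    have hbound : ∀ r ∈ {r : ℝ | ∃ u : EuclideanSpace ℝ (Fin n) → ℝ,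
        LipschitzWith 1 u ∧ (∀ x ∈ frontier Ω, u x = 0) ∧ r = ∫ x, u x ∂μ}, r ≤ I := by
      rintro r ⟨u, hu, hu0, rfl⟩
      exact integral_mono (integrable_of_compact_support μ _ hKc hμ u hu.continuous) hId
        (fun x => hub u hu hu0 x)
    have hLHS : sSup {r : ℝ | ∃ u : EuclideanSpace ℝ (Fin n) → ℝ,
        LipschitzWith 1 u ∧ (∀ x ∈ frontier Ω, u x = 0) ∧ r = ∫ x, u x ∂μ} = I := by
      refine le_antisymm (Real.sSup_le hbound hI0) (le_csSup ⟨I, hbound⟩ ?_)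
      exact ⟨fun x => infDist x (frontier Ω), hLip,
        fun x hx => infDist_zero_of_mem hx, rfl⟩
    -- upper bound for Kantorovich functional
    have upper : ∀ δ : Measure (EuclideanSpace ℝ (Fin n)), IsProbabilityMeasure δ →
        δ (frontier Ω)ᶜ = 0 → ∀ u : EuclideanSpace ℝ (Fin n) → ℝ, LipschitzWith 1 u →
        (∫ x, u x ∂μ) - (∫ x, u x ∂δ) ≤ 2 * diam (closure Ω) := by
      intro δ hδp hδs u hu
      haveI := hδp
      have hδae : ∀ᵐ x ∂δ, x ∈ frontier Ω := by rw [ae_iff]; exact hδs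
      have hiuμ : Integrable u μ := integrable_of_compact_support μ _ hKc hμ u hu.continuous
      have hiuδ : Integrable u δ := integrable_of_compact_support δ _ hFc hδs u hu.continuous
      have hptu : ∀ x ∈ closure Ω, u x ≤ u y₀ + diam (closure Ω) := by
        intro x hx
        have h1 : dist (u x) (u y₀) ≤ dist x y₀ := by simpa using hu.dist_le_mul x y₀
        rw [Real.dist_eq] at h1
        have h2 : u x - u y₀ ≤ dist x y₀ := (le_abs_self _).trans h1
        have h3 : dist x y₀ ≤ diam (closure Ω) := dist_le_diam_of_mem hKb hx (hFK hy₀)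
        linarith
      have hptl : ∀ x ∈ frontier Ω, u y₀ - diam (closure Ω) ≤ u x := by
        intro x hx
        have h1 : dist (u y₀) (u x) ≤ dist y₀ x := by simpa using hu.dist_le_mul y₀ x
        rw [Real.dist_eq] at h1
        have h2 : u y₀ - u x ≤ dist y₀ x := (le_abs_self _).trans h1
        have h3 : dist y₀ x ≤ diam (closure Ω) := dist_le_diam_of_mem hKb (hFK hy₀) (hFK hx)
        linarith
      have h1 : ∫ x, u x ∂μ ≤ u y₀ + diam (closure Ω) := by
        calc ∫ x, u x ∂μ ≤ ∫ _x, (u y₀ + diam (closure Ω)) ∂μ :=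
              integral_mono_ae hiuμ (integrable_const _) (hμae.mono fun x hx => hptu x hx)
          _ = u y₀ + diam (closure Ω) := by simp
      have h2 : u y₀ - diam (closure Ω) ≤ ∫ x, u x ∂δ := by
        calc (u y₀ - diam (closure Ω) : ℝ) = ∫ _x, (u y₀ - diam (closure Ω)) ∂δ := by simp
          _ ≤ ∫ x, u x ∂δ :=
              integral_mono_ae (integrable_const _) hiuδ (hδae.mono fun x hx => hptl x hx)
      linarith
    have hRHSge : ∀ w ∈ {w : ℝ | ∃ δ : Measure (EuclideanSpace ℝ (Fin n)),
        IsProbabilityMeasure δ ∧ δ (frontier Ω)ᶜ = 0 ∧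
        w = sSup {r : ℝ | ∃ u : EuclideanSpace ℝ (Fin n) → ℝ,
          LipschitzWith 1 u ∧ r = (∫ x, u x ∂μ) - (∫ x, u x ∂δ)}}, I ≤ w := by
      rintro w ⟨δ, hδp, hδs, rfl⟩
      haveI := hδp
      have hδae : ∀ᵐ x ∂δ, x ∈ frontier Ω := by rw [ae_iff]; exact hδs
      have hIδ : ∫ x, infDist x (frontier Ω) ∂δ = 0 := by
        have hz : (fun x => infDist x (frontier Ω)) =ᵐ[δ] (fun _ => (0 : ℝ)) :=
          hδae.mono fun x hx => infDist_zero_of_mem hx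
        rw [integral_congr_ae hz, integral_zero]
      refine le_csSup ⟨2 * diam (closure Ω), ?_⟩ ?_
      · rintro r ⟨u, hu, rfl⟩
        exact upper δ hδp hδs u hu
      · refine ⟨fun x => infDist x (frontier Ω), hLip, ?_⟩
        rw [hIδ, sub_zero]
    have hRHSle : sInf {w : ℝ | ∃ δ : Measure (EuclideanSpace ℝ (Fin n)),
        IsProbabilityMeasure δ ∧ δ (frontier Ω)ᶜ = 0 ∧
        w = sSup {r : ℝ | ∃ u : EuclideanSpace ℝ (Fin n) → ℝ,
          LipschitzWith 1 u ∧ r = (∫ x, u x ∂μ) - (∫ x, u x ∂δ)}} ≤ I := by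
      refine le_of_forall_pos_le_add ?_
      intro ε hε
      obtain ⟨t, htF, htfin, htcov⟩ := finite_approx_of_totallyBounded hFc.totallyBounded ε hε
      set l := htfin.toFinset.toList with hl
      have hlmem : ∀ y ∈ l, y ∈ frontier Ω := by
        intro y hy
        apply htF
        rw [hl, Finset.mem_toList, Set.Finite.mem_toFinset] at hy
        exact hy
      set T := pickFn (frontier Ω) ε y₀ l with hT
      have hTm : Measurable T := pickFn_measurable _ _ _ _
      have hTF : ∀ x, T x ∈ frontier Ω := fun x => pickFn_mem _ _ _ hy₀ _ hlmem x
      have hTd : ∀ x, dist x (T x) ≤ infDist x (frontier Ω) + ε := by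
        intro x
        apply pickFn_dist
        obtain ⟨p, hp, hpd⟩ := hFc.exists_infDist_eq_dist ⟨y₀, hy₀⟩ x
        obtain ⟨y, hy, hpy⟩ := mem_iUnion₂.1 (htcov hp)
        refine ⟨y, by rw [hl, Finset.mem_toList, Set.Finite.mem_toFinset]; exact hy, ?_⟩
        have hdy : dist p y < ε := mem_ball.1 hpy
        calc dist x y ≤ dist x p + dist p y := dist_triangle x p y
          _ ≤ infDist x (frontier Ω) + ε := by rw [← hpd]; linarith
      set δ := μ.map T with hδ
      haveI hδprob : IsProbabilityMeasure δ := Measure.isProbabilityMeasure_map hTm.aemeasurable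
      have hδs : δ (frontier Ω)ᶜ = 0 := by
        rw [hδ, Measure.map_apply hTm isClosed_frontier.measurableSet.compl]
        have : T ⁻¹' (frontier Ω)ᶜ = ∅ := by
          ext x; simp [hTF x]
        rw [this, measure_empty]
      have hsup : sSup {r : ℝ | ∃ u : EuclideanSpace ℝ (Fin n) → ℝ,
          LipschitzWith 1 u ∧ r = (∫ x, u x ∂μ) - (∫ x, u x ∂δ)} ≤ I + ε := by
        refine Real.sSup_le ?_ (by linarith)
        rintro r ⟨u, hu, rfl⟩
        have hiu : Integrable u μ := integrable_of_compact_support μ _ hKc hμ u hu.continuous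
        obtain ⟨C, hC⟩ := hKc.exists_bound_of_continuousOn hu.continuous.continuousOn
        have hiuT : Integrable (fun x => u (T x)) μ := by
          refine ⟨((hu.continuous.measurable).comp hTm).aestronglyMeasurable, ?_⟩
          exact HasFiniteIntegral.of_bounded (C := C)
            (Filter.Eventually.of_forall fun x => hC _ (hFK (hTF x)))
        have hmap : ∫ x, u x ∂δ = ∫ x, u (T x) ∂μ :=
          integral_map hTm.aemeasurable hu.continuous.aestronglyMeasurable
        rw [hmap, ← integral_sub hiu hiuT]
        calc ∫ x, (u x - u (T x)) ∂μ ≤ ∫ x, (infDist x (frontier Ω) + ε) ∂μ := by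
              refine integral_mono (hiu.sub hiuT) (hId.add (integrable_const ε)) ?_
              intro x
              have h1 : dist (u x) (u (T x)) ≤ dist x (T x) := by
                simpa using hu.dist_le_mul x (T x)
              rw [Real.dist_eq] at h1
              have h2 : u x - u (T x) ≤ dist x (T x) := (le_abs_self _).trans h1
              exact h2.trans (hTd x)
          _ = I + ε := by rw [integral_add hId (integrable_const ε), integral_const]; simp [hIdef]
      refine le_trans (csInf_le ⟨I, hRHSge⟩ ?_) hsup
      exact ⟨δ, hδprob, hδs, rfl⟩
    have hne : {w : ℝ | ∃ δ : Measure (EuclideanSpace ℝ (Fin n)),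
        IsProbabilityMeasure δ ∧ δ (frontier Ω)ᶜ = 0 ∧
        w = sSup {r : ℝ | ∃ u : EuclideanSpace ℝ (Fin n) → ℝ,
          LipschitzWith 1 u ∧ r = (∫ x, u x ∂μ) - (∫ x, u x ∂δ)}}.Nonempty := by
      refine ⟨_, Measure.dirac y₀, inferInstance, ?_, rfl⟩
      rw [Measure.dirac_apply' _ isClosed_frontier.measurableSet.compl]
      simp [hy₀]
    rw [hLHS]
    exact le_antisymm (le_csInf hne hRHSge) hRHSle
  · -- frontier empty
    have hfe : frontier Ω = ∅ := not_nonempty_iff_eq_empty.1 hF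
    have h2 : {w : ℝ | ∃ δ : Measure (EuclideanSpace ℝ (Fin n)),
        IsProbabilityMeasure δ ∧ δ (frontier Ω)ᶜ = 0 ∧
        w = sSup {r : ℝ | ∃ u : EuclideanSpace ℝ (Fin n) → ℝ,
          LipschitzWith 1 u ∧ r = (∫ x, u x ∂μ) - (∫ x, u x ∂δ)}} = ∅ := by
      ext w
      simp only [mem_setOf_eq, mem_empty_iff_false, iff_false]
      rintro ⟨δ, hδp, hδs, -⟩
      rw [hfe, compl_empty] at hδs
      rw [hδp.measure_univ] at hδs
      exact one_ne_zero hδs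
    have h1 : {r : ℝ | ∃ u : EuclideanSpace ℝ (Fin n) → ℝ,
        LipschitzWith 1 u ∧ (∀ x ∈ frontier Ω, u x = 0) ∧ r = ∫ x, u x ∂μ} = Set.univ := by
      ext r
      simp only [mem_setOf_eq, mem_univ, iff_true]
      refine ⟨fun _ => r, (LipschitzWith.const r).weaken zero_le_one, by simp [hfe], by simp⟩
    rw [h1, h2, Real.sSup_univ, Real.sInf_empty]
end

section
/- Let Ω ⊂ ℝⁿ be a bounded domain with high ridge R_Ω and inradius r_Ω. For every probability measure μ on the closure of Ω, J_*^∞(μ) := sup{∫ u dμ : u ∈ Lip_0(Ω), Lip(u) ≤ 1} ≤ r_Ω, with equality if supp(μ) ⊆ R_Ω. Consequently, the probability measures supported on R_Ω are exactly the maximizers of J_*^∞ over probability measures (equivalently, the minimizers of the dual Rayleigh quotient |μ|(Ω)/J_*^∞(μ)). -/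
open MeasureTheory Metric

/-- For probability measures `μ` on the closure of `Ω`,
`J_*^∞(μ) = sup{∫ u dμ : u ∈ Lip_0(Ω), Lip(u) ≤ 1} ≤ r_Ω`, with equality exactly when
`μ` is supported on the high ridge `R_Ω`; i.e., the measures supported on `R_Ω` are
exactly the maximizers of `J_*^∞` (minimizers of the dual Rayleigh quotient). -/
theorem dual_rayleigh_minimizers
    {n : ℕ} (Ω : Set (EuclideanSpace ℝ (Fin n)))
    (hΩo : IsOpen Ω) (hΩb : Bornology.IsBounded Ω) (hΩne : Ω.Nonempty)
    (rΩ : ℝ) (hrub : ∀ x ∈ Ω, infDist x (frontier Ω) ≤ rΩ)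
    (R : Set (EuclideanSpace ℝ (Fin n)))
    (hR : R = {x ∈ Ω | infDist x (frontier Ω) = rΩ})
    (hRne : R.Nonempty)
    (μ : Measure (EuclideanSpace ℝ (Fin n))) [IsProbabilityMeasure μ]
    (hμ : μ (closure Ω)ᶜ = 0) :
    sSup {r : ℝ | ∃ u : EuclideanSpace ℝ (Fin n) → ℝ, LipschitzWith 1 u ∧
        (∀ x ∈ frontier Ω, u x = 0) ∧ r = ∫ x, u x ∂μ} ≤ rΩ ∧
    (sSup {r : ℝ | ∃ u : EuclideanSpace ℝ (Fin n) → ℝ, LipschitzWith 1 u ∧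
        (∀ x ∈ frontier Ω, u x = 0) ∧ r = ∫ x, u x ∂μ} = rΩ ↔ μ Rᶜ = 0) := by
  classical
  set S : Set ℝ := {r : ℝ | ∃ u : EuclideanSpace ℝ (Fin n) → ℝ, LipschitzWith 1 u ∧
      (∀ x ∈ frontier Ω, u x = 0) ∧ r = ∫ x, u x ∂μ} with hS
  by_cases hfr : (frontier Ω).Nonempty
  · -- main case: the frontier is nonempty
    set d : EuclideanSpace ℝ (Fin n) → ℝ := fun x => infDist x (frontier Ω) with hd
    haveI : Nonempty (frontier Ω) := hfr.to_subtype
    have hcomp : IsCompact (closure Ω) := hΩb.isCompact_closure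
    have hμae : ∀ᵐ x ∂μ, x ∈ closure Ω := by
      rw [ae_iff]
      simpa [Set.compl_def] using hμ
    have hint : ∀ u : EuclideanSpace ℝ (Fin n) → ℝ, Continuous u → Integrable u μ := by
      intro u hu
      have h1 : IntegrableOn u (closure Ω) μ :=
        hu.continuousOn.integrableOn_compact hcomp
      rwa [IntegrableOn, Measure.restrict_eq_self_of_ae_mem hμae] at h1
    have hub : ∀ u : EuclideanSpace ℝ (Fin n) → ℝ, LipschitzWith 1 u →
        (∀ x ∈ frontier Ω, u x = 0) → ∀ x, u x ≤ d x := by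
      intro u hL h0 x
      rw [hd]
      simp only
      rw [infDist_eq_iInf]
      refine le_ciInf fun y => ?_
      have h1 : dist (u x) (u y) ≤ 1 * dist x (y : EuclideanSpace ℝ (Fin n)) :=
        hL.dist_le_mul x y
      rw [Real.dist_eq, one_mul, h0 y y.2, sub_zero] at h1
      exact (le_abs_self _).trans h1
    have hdL : LipschitzWith 1 d := lipschitz_infDist_pt _
    have hd0 : ∀ x ∈ frontier Ω, d x = 0 := fun x hx => infDist_zero_of_mem hx
    have hdint : Integrable d μ := hint d hdL.continuous
    have hr0 : 0 ≤ rΩ := by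
      obtain ⟨x0, hx0⟩ := hRne
      rw [hR] at hx0
      exact hx0.2 ▸ infDist_nonneg
    have hrpos : 0 < rΩ := by
      obtain ⟨x0, hx0⟩ := hRne
      rw [hR] at hx0
      obtain ⟨hx0Ω, hx0d⟩ := hx0
      have hnm : x0 ∉ frontier Ω := by
        rw [hΩo.frontier_eq]
        exact fun h => h.2 hx0Ω
      have := (isClosed_frontier.notMem_iff_infDist_pos hfr).mp hnm
      linarith
    have hdle : ∀ᵐ x ∂μ, d x ≤ rΩ := by
      filter_upwards [hμae] with x hx
      by_cases hxΩ : x ∈ Ω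
      · exact hrub x hxΩ
      · have hxf : x ∈ frontier Ω := by
          rw [hΩo.frontier_eq]; exact ⟨hx, hxΩ⟩
        rw [hd0 x hxf]; exact hr0
    have hmem : ∀ r ∈ S, r ≤ ∫ x, d x ∂μ := by
      rintro r ⟨u, hL, h0, rfl⟩
      exact integral_mono (hint u hL.continuous) hdint (hub u hL h0)
    have hdS : (∫ x, d x ∂μ) ∈ S := ⟨d, hdL, hd0, rfl⟩
    have hsup : sSup S = ∫ x, d x ∂μ :=
      le_antisymm (csSup_le ⟨_, hdS⟩ hmem) (le_csSup ⟨_, hmem⟩ hdS)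
    have hdle_int : (∫ x, d x ∂μ) ≤ rΩ := by
      have h1 : (∫ x, d x ∂μ) ≤ ∫ _, rΩ ∂μ :=
        integral_mono_ae hdint (integrable_const rΩ) hdle
      simpa using h1
    rw [hsup]
    refine ⟨hdle_int, ?_, ?_⟩
    · intro heq
      have h0 : ∫ x, (rΩ - d x) ∂μ = 0 := by
        rw [integral_sub (integrable_const _) hdint, heq]
        simp
      have hnn : 0 ≤ᵐ[μ] fun x => rΩ - d x :=
        hdle.mono fun x hx => by simp only [Pi.zero_apply]; linarith
      have hz := (integral_eq_zero_iff_of_nonneg_ae hnn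
        ((integrable_const rΩ).sub hdint)).mp h0
      have hmemR : ∀ᵐ x ∂μ, x ∈ R := by
        filter_upwards [hμae, hz] with x hx hx0
        have hdx : d x = rΩ := by
          have h2 : rΩ - d x = 0 := hx0
          linarith
        rw [hR]
        refine ⟨?_, hdx⟩
        by_contra hxΩ
        have hxf : x ∈ frontier Ω := by
          rw [hΩo.frontier_eq]; exact ⟨hx, hxΩ⟩
        have h3 : d x = 0 := hd0 x hxf
        linarith
      rw [ae_iff] at hmemR
      simpa [Set.compl_def] using hmemR
    · intro hRnull
      have hmemR : ∀ᵐ x ∂μ, x ∈ R := by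
        rw [ae_iff]
        simpa [Set.compl_def] using hRnull
      have heq : d =ᵐ[μ] fun _ => rΩ := by
        filter_upwards [hmemR] with x hx
        rw [hR] at hx
        exact hx.2
      rw [integral_congr_ae heq]
      simp
  · -- degenerate case: empty frontier
    rw [Set.not_nonempty_iff_eq_empty] at hfr
    have hr0 : rΩ = 0 := by
      obtain ⟨x, hx⟩ := hRne
      rw [hR] at hx
      have h1 := hx.2
      rw [hfr, infDist_empty] at h1
      exact h1.symm
    have hSuniv : S = Set.univ := by
      ext r
      simp only [Set.mem_univ, iff_true, hS, Set.mem_setOf_eq]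
      refine ⟨fun _ => r, (LipschitzWith.const r).weaken (by norm_num), ?_, by simp⟩
      simp [hfr]
    have hRΩ : R = Ω := by
      rw [hR, hfr, hr0]
      ext x
      simp [infDist_empty]
    have hclosure : closure Ω = Ω := by
      rw [closure_eq_self_union_frontier, hfr, Set.union_empty]
    rw [hSuniv, Real.sSup_univ, hr0, hRΩ]
    refine ⟨le_refl 0, ?_⟩
    rw [← hclosure]
    exact ⟨fun _ => hμ, fun _ => rfl⟩
end
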